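/- Under the following hypotheses, with S_ℓ := I − 2πiℓ • T(z,z) assumed boundedly invertible: (i) for c = μ and for c = z, for all λ ∈ Ω, T(λ,c) = V(λ,c) − ∫_a^b (ν − z)⁻¹ • (V(λ,ν) ∘ T(ν,c)) dν; (ii) every continuous X : [a,b] → B(𝔥) satisfying X(λ) = −∫_a^b (ν − z)⁻¹ • (V(λ,ν) ∘ X(ν)) dν for all λ ∈ [a,b] is identically zero; (iii) for all λ ∈ Ω, T'(λ,μ) = V(λ,μ) + 2πiℓ • (V(λ,z) ∘ T'(z,μ)) − ∫_a^b (ν − z)⁻¹ • (V(λ,ν) ∘ T'(ν,μ)) dν; it follows that for all λ ∈ Ω, T'(λ,μ) = T(λ,μ) + 2πiℓ • (T(λ,z) ∘ S_ℓ⁻¹ ∘ T(z,μ)). -/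

import Mathlib

open MeasureTheory Set ContinuousLinearMap

/-- The representation formula of Proposition 2 (equation (16)):
`T'(λ,μ) = T(λ,μ) + 2πiℓ T(λ,z) S_ℓ⁻¹ T(z,μ)`, where `S_ℓ = I - 2πiℓ T(z,z)` is the
physical-sheet scattering matrix, assumed boundedly invertible with inverse `Sinv`. -/
theorem continued_kernel_representation
    {𝕙 : Type*} [NormedAddCommGroup 𝕙] [InnerProductSpace ℂ 𝕙] [CompleteSpace 𝕙]
    (a b : ℝ) (hab : a < b)
    (Ω : Set ℂ) (hΩopen : IsOpen Ω)
    (hΩsub : ∀ x : ℝ, x ∈ Set.Icc a b → (x : ℂ) ∈ Ω)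
    (ℓ : ℂ) (hℓ : ℓ = 1 ∨ ℓ = -1)
    (z : ℂ) (hzΩ : z ∈ Ω) (hzim : z.im ≠ 0)
    (μ : ℂ) (hμΩ : μ ∈ Ω)
    (V T T' : ℂ → ℂ → (𝕙 →L[ℂ] 𝕙))
    -- the scattering matrix `S_ℓ = I - 2πiℓ T(z,z)` is boundedly invertible, with inverse `Sinv`
    (Sinv : 𝕙 →L[ℂ] 𝕙)
    (hSl : Sinv * ((1 : 𝕙 →L[ℂ] 𝕙) - (2 * (Real.pi : ℂ) * Complex.I * ℓ) • T z z) = 1)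
    (hSr : ((1 : 𝕙 →L[ℂ] 𝕙) - (2 * (Real.pi : ℂ) * Complex.I * ℓ) • T z z) * Sinv = 1)
    -- continuity in `ν` on `[a,b]` of all the factors appearing in the integrands below
    (hVc : ∀ lam ∈ Ω, ContinuousOn (fun ν : ℝ => V lam (↑ν)) (Set.Icc a b))
    (hTμc : ContinuousOn (fun ν : ℝ => T (↑ν) μ) (Set.Icc a b))
    (hTzc : ContinuousOn (fun ν : ℝ => T (↑ν) z) (Set.Icc a b))
    (hT'c : ContinuousOn (fun ν : ℝ => T' (↑ν) μ) (Set.Icc a b))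
    -- (i) Lippmann–Schwinger equations on the physical sheet, for `c = μ` and `c = z`
    (hLSμ : ∀ lam ∈ Ω,
      T lam μ = V lam μ - ∫ ν in a..b, ((ν : ℂ) - z)⁻¹ • (V lam (↑ν) ∘L T (↑ν) μ))
    (hLSz : ∀ lam ∈ Ω,
      T lam z = V lam z - ∫ ν in a..b, ((ν : ℂ) - z)⁻¹ • (V lam (↑ν) ∘L T (↑ν) z))
    -- (ii) uniqueness for the homogeneous equation
    (huniq : ∀ X : ℝ → (𝕙 →L[ℂ] 𝕙), ContinuousOn X (Set.Icc a b) →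
      (∀ lam ∈ Set.Icc a b,
        X lam = -∫ ν in a..b, ((ν : ℂ) - z)⁻¹ • (V (↑lam) (↑ν) ∘L X ν)) →
      ∀ lam ∈ Set.Icc a b, X lam = 0)
    -- (iii) continued Lippmann–Schwinger equation on the unphysical sheet
    (hLS' : ∀ lam ∈ Ω,
      T' lam μ = V lam μ + (2 * (Real.pi : ℂ) * Complex.I * ℓ) • (V lam z ∘L T' z μ)
        - ∫ ν in a..b, ((ν : ℂ) - z)⁻¹ • (V lam (↑ν) ∘L T' (↑ν) μ)) :
    ∀ lam ∈ Ω,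
      T' lam μ = T lam μ
        + (2 * (Real.pi : ℂ) * Complex.I * ℓ) • (T lam z ∘L (Sinv ∘L T z μ)) := by
  set c : ℂ := 2 * (Real.pi : ℂ) * Complex.I * ℓ with hc
  set K : 𝕙 →L[ℂ] 𝕙 := T' z μ with hK
  have hle : a ≤ b := hab.le
  have hne : ∀ ν : ℝ, ((ν : ℂ) - z) ≠ 0 := by
    intro ν h
    apply hzim
    have : (ν : ℂ) = z := by linear_combination h
    rw [← this]
    simp
  have hinv : ContinuousOn (fun ν : ℝ => ((ν : ℂ) - z)⁻¹) (Set.Icc a b) :=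
    ((Complex.continuous_ofReal.continuousOn.sub continuousOn_const).inv₀ fun ν _ => hne ν)
  have integ : ∀ lam ∈ Ω, ∀ F : ℝ → (𝕙 →L[ℂ] 𝕙), ContinuousOn F (Set.Icc a b) →
      IntervalIntegrable (fun ν : ℝ => ((ν : ℂ) - z)⁻¹ • (V lam (↑ν) ∘L F ν)) volume a b := by
    intro lam hlam F hF
    apply ContinuousOn.intervalIntegrable
    rw [Set.uIcc_of_le hle]
    exact hinv.smul ((hVc lam hlam).clm_comp hF)
  have hXc : ContinuousOn (fun ν : ℝ => T' (↑ν) μ - T (↑ν) μ - c • (T (↑ν) z ∘L K))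
      (Set.Icc a b) :=
    (hT'c.sub hTμc).sub ((hTzc.clm_comp continuousOn_const).const_smul c)
  have key : ∀ lam ∈ Ω,
      T' lam μ - T lam μ - c • (T lam z ∘L K)
        = -∫ ν in a..b, ((ν : ℂ) - z)⁻¹ •
            (V lam (↑ν) ∘L (T' (↑ν) μ - T (↑ν) μ - c • (T (↑ν) z ∘L K))) := by
    intro lam hlam
    have h1 := integ lam hlam _ hT'c
    have h2 := integ lam hlam _ hTμc
    have h3 : IntervalIntegrable (fun ν : ℝ => ((ν : ℂ) - z)⁻¹ • (V lam (↑ν) ∘L (c • (T (↑ν) z ∘L K))))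
        volume a b := integ lam hlam _ ((hTzc.clm_comp (continuousOn_const (c := K))).const_smul c)
    have hint : (∫ ν in a..b, ((ν : ℂ) - z)⁻¹ •
            (V lam (↑ν) ∘L (T' (↑ν) μ - T (↑ν) μ - c • (T (↑ν) z ∘L K))))
        = (∫ ν in a..b, ((ν : ℂ) - z)⁻¹ • (V lam (↑ν) ∘L T' (↑ν) μ))
          - (∫ ν in a..b, ((ν : ℂ) - z)⁻¹ • (V lam (↑ν) ∘L T (↑ν) μ))
          - (∫ ν in a..b, ((ν : ℂ) - z)⁻¹ • (V lam (↑ν) ∘L (c • (T (↑ν) z ∘L K)))) := by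
      rw [← intervalIntegral.integral_sub h1 h2, ← intervalIntegral.integral_sub (h1.sub h2) h3]
      congr 1
      funext ν
      simp [ContinuousLinearMap.comp_sub, smul_sub]
    have hJ : c • ((∫ ν in a..b, ((ν : ℂ) - z)⁻¹ • (V lam (↑ν) ∘L T (↑ν) z)) ∘L K)
        = ∫ ν in a..b, ((ν : ℂ) - z)⁻¹ • (V lam (↑ν) ∘L (c • (T (↑ν) z ∘L K))) := by
      have hL := ((ContinuousLinearMap.compL ℂ 𝕙 𝕙 𝕙).flip K).intervalIntegral_comp_comm
        (integ lam hlam _ hTzc)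
      simp only [ContinuousLinearMap.flip_apply, ContinuousLinearMap.compL_apply] at hL
      rw [← hL, ← intervalIntegral.integral_smul]
      congr 1
      funext ν
      ext v
      simp [smul_smul, mul_comm]
    rw [hLS' lam hlam, hLSμ lam hlam, hLSz lam hlam, hint, ContinuousLinearMap.sub_comp,
      smul_sub, hJ]
    abel
  have hX0 : ∀ ν ∈ Set.Icc a b, T' (↑ν) μ - T (↑ν) μ - c • (T (↑ν) z ∘L K) = 0 :=
    huniq _ hXc (fun lam hlam => key (↑lam) (hΩsub lam hlam))
  have main : ∀ lam ∈ Ω, T' lam μ = T lam μ + c • (T lam z ∘L K) := by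
    intro lam hlam
    have h := key lam hlam
    have hz : (∫ ν in a..b, ((ν : ℂ) - z)⁻¹ •
        (V lam (↑ν) ∘L (T' (↑ν) μ - T (↑ν) μ - c • (T (↑ν) z ∘L K)))) = 0 := by
      rw [intervalIntegral.integral_congr (g := fun _ => (0 : 𝕙 →L[ℂ] 𝕙))]
      · simp
      · intro ν hν
        rw [Set.uIcc_of_le hle] at hν
        simp only [hX0 ν hν, ContinuousLinearMap.comp_zero, smul_zero]
    rw [hz, neg_zero, sub_sub, sub_eq_zero] at h
    exact h
  have hKeq : K = Sinv ∘L T z μ := by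
    have h := main z hzΩ
    have h2 : ((1 : 𝕙 →L[ℂ] 𝕙) - c • T z z) * K = T z μ := by
      rw [sub_mul, one_mul, smul_mul_assoc]
      have hmul : (T z z) * K = T z z ∘L K := rfl
      rw [hmul, sub_eq_iff_eq_add]
      exact hK.trans h
    calc K = (Sinv * ((1 : 𝕙 →L[ℂ] 𝕙) - c • T z z)) * K := by rw [hSl, one_mul]
      _ = Sinv * (((1 : 𝕙 →L[ℂ] 𝕙) - c • T z z) * K) := by rw [mul_assoc]
      _ = Sinv ∘L T z μ := by rw [h2]; rfl
  intro lam hlam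
  rw [main lam hlam, hKeq]
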